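/- arXiv:math/9806042 — 2 statements merged into one kernel-verified Lean document; each statement's English description precedes it below -/
import Mathlib

section
/- Let b, c be nonnegative integers with c ≤ b. If b is even and c is odd, then Δ'(x;b,c) = 0 for every rational number x. -/
open Finset

/-- Generalized binomial coefficient `C(x,k)`. -/
def gbinom (x : ℚ) (k : ℤ) : ℚ :=
  if 0 ≤ k then (∏ m ∈ Finset.range k.toNat, (x - m)) / (k.toNat.factorial : ℚ) else 0

/-- Shifted factorial `(a)_k` with integer index. -/
def poch (a : ℚ) (k : ℤ) : ℚ :=
  if 0 ≤ k then ∏ m ∈ Finset.range k.toNat, (a + m)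
  else 1 / ∏ m ∈ Finset.range (-k).toNat, (a - (m + 1))

/-- The matrix `M(x;b,c)`. -/
def Mmat (x : ℚ) (b c : ℕ) : Matrix (Fin (b + c)) (Fin (b + c)) ℚ := fun i j =>
  if (i : ℕ) < c then
    (if (j : ℕ) < b then gbinom (x + (j : ℕ)) ((i : ℕ) : ℤ)
     else gbinom (2 * x + (j : ℕ)) ((i : ℕ) : ℤ))
  else if (i : ℕ) < b then
    (if (j : ℕ) < c then 0
     else if (j : ℕ) < b then gbinom (x + (j : ℕ)) ((i : ℕ) : ℤ)
     else gbinom (2 * x + (j : ℕ)) ((i : ℕ) : ℤ))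
  else
    (if (j : ℕ) < c then 2 * gbinom (x + (j : ℕ)) (((i : ℕ) : ℤ) - (b : ℤ))
     else if (j : ℕ) < b then gbinom (x + (j : ℕ)) (((i : ℕ) : ℤ) - (b : ℤ))
     else 0)

/-- `Δ(x;b,c)`. -/
def Δdet (x : ℚ) (b c : ℕ) : ℚ := (Mmat x b c).det

/-- The matrix `M'(x;b,c)`; column index `j` of the paper is `c + j'`. -/
def M'mat (x : ℚ) (b c : ℕ) : Matrix (Fin b) (Fin b) ℚ := fun i j =>
  if c + (j : ℕ) < b then
    gbinom (x + (c : ℕ)) (((i : ℕ) : ℤ) - ((c : ℤ) + (j : ℕ)) + (c : ℤ))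
  else if (i : ℕ) < c then
    2 * gbinom (2 * x + (b : ℕ)) (((i : ℕ) : ℤ) - ((c : ℤ) + (j : ℕ)) + (b : ℤ))
  else
    gbinom (2 * x + (b : ℕ)) (((i : ℕ) : ℤ) - ((c : ℤ) + (j : ℕ)) + (b : ℤ))

/-- `Δ'(x;b,c)`. -/
def Δ'det (x : ℚ) (b c : ℕ) : ℚ := (M'mat x b c).det

lemma gbinom_of_neg {x : ℚ} {k : ℤ} (h : k < 0) : gbinom x k = 0 := by
  rw [gbinom, if_neg (by omega)]

lemma gbinom_natIdx (x : ℚ) (k : ℕ) :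
    gbinom x (k : ℤ) = (∏ m ∈ Finset.range k, (x - m)) / (k.factorial : ℚ) := by
  rw [gbinom, if_pos (by positivity), Int.toNat_natCast]

lemma gbinom_zero_right (x : ℚ) : gbinom x 0 = 1 := by
  have := gbinom_natIdx x 0
  simpa using this

lemma desc_smeval_eq_prod (x : ℚ) (k : ℕ) :
    (descPochhammer ℤ k).smeval x = ∏ m ∈ Finset.range k, (x - m) := by
  induction k with
  | zero => simp [descPochhammer_zero, Polynomial.smeval_one]
  | succ n ih =>
      rw [descPochhammer_succ_right, Polynomial.smeval_mul, ih, Finset.prod_range_succ]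
      congr 1
      rw [Polynomial.smeval_sub, Polynomial.smeval_X, Polynomial.smeval_natCast]
      simp

lemma gbinom_eq_choose (x : ℚ) (k : ℕ) : gbinom x (k : ℤ) = Ring.choose x k := by
  have h1 : (descPochhammer ℤ k).smeval x = k.factorial • Ring.choose x k :=
    Ring.descPochhammer_eq_factorial_smul_choose x k
  rw [desc_smeval_eq_prod] at h1
  rw [gbinom_natIdx, h1, nsmul_eq_mul]
  field_simp

lemma gbinom_natCast (M k : ℕ) : gbinom (M : ℚ) (k : ℤ) = (M.choose k : ℚ) := by
  rw [gbinom_eq_choose, Ring.choose_natCast]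

lemma gbinom_nat_eq_zero {M k : ℕ} (h : M < k) : gbinom (M : ℚ) (k : ℤ) = 0 := by
  rw [gbinom_natCast, Nat.choose_eq_zero_of_lt h, Nat.cast_zero]

lemma gbinom_zero_left (k : ℤ) : gbinom 0 k = if k = 0 then 1 else 0 := by
  rcases lt_trichotomy k 0 with h | h | h
  · rw [gbinom_of_neg h, if_neg (by omega)]
  · subst h; simpa using gbinom_zero_right 0
  · rw [if_neg (by omega)]
    have : k = ((k.toNat : ℕ) : ℤ) := by omega
    rw [this, gbinom_natIdx]
    have h0 : (0 : ℕ) ∈ Finset.range k.toNat := by simp; omega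
    rw [Finset.prod_eq_zero h0 (by simp)]
    simp

lemma gbinom_vandermonde (x y : ℚ) (n : ℕ) :
    ∑ j ∈ range (n + 1), gbinom x (j : ℤ) * gbinom y ((n : ℤ) - j) = gbinom (x + y) (n : ℤ) := by
  rw [gbinom_eq_choose, Ring.add_choose_eq n (Commute.all x y),
    Finset.Nat.sum_antidiagonal_eq_sum_range_succ_mk]
  refine Finset.sum_congr rfl fun j hj => ?_
  have hjn : j ≤ n := by simp at hj; omega
  rw [gbinom_eq_choose, show (n : ℤ) - j = ((n - j : ℕ) : ℤ) by omega, gbinom_eq_choose]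

lemma vanderInt (x y : ℚ) (N : ℤ) (s : ℕ) (h : N < (s : ℤ)) :
    ∑ j ∈ range s, gbinom x (j : ℤ) * gbinom y (N - j) = gbinom (x + y) N := by
  rcases lt_or_ge N 0 with hN | hN
  · rw [gbinom_of_neg hN]
    refine Finset.sum_eq_zero fun j hj => ?_
    rw [gbinom_of_neg (show N - (j : ℤ) < 0 by omega), mul_zero]
  · obtain ⟨n, rfl⟩ : ∃ n : ℕ, N = (n : ℤ) := ⟨N.toNat, by omega⟩
    have hns : n + 1 ≤ s := by omega
    rw [← gbinom_vandermonde x y n]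
    symm
    apply Finset.sum_subset (Finset.range_subset_range.mpr hns)
    intro j hj hj'
    simp only [Finset.mem_range] at hj hj'
    rw [gbinom_of_neg (show (n : ℤ) - (j : ℤ) < 0 by omega), mul_zero]

lemma vanderNat (m : ℕ) (y : ℚ) (N : ℤ) (s : ℕ) (h : m < s) :
    ∑ j ∈ range s, gbinom (m : ℚ) (j : ℤ) * gbinom y (N - j) = gbinom ((m : ℚ) + y) N := by
  rcases lt_or_ge N (s : ℤ) with hs | hs
  · exact vanderInt _ y N s hs
  · set s' : ℕ := N.toNat + 1 with hs'
    have h1 : N < (s' : ℤ) := by omega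
    rw [← vanderInt _ y N s' h1]
    apply Finset.sum_subset (Finset.range_subset_range.mpr (by omega))
    intro j hj hj'
    simp only [Finset.mem_range] at hj hj'
    rw [gbinom_nat_eq_zero (by omega), zero_mul]

lemma gbinom_reflect (y : ℚ) (K : ℕ) :
    gbinom y (K : ℤ) = (-1) ^ K * gbinom ((K : ℚ) - y - 1) (K : ℤ) := by
  rw [gbinom_natIdx, gbinom_natIdx]
  have : ∏ m ∈ Finset.range K, ((K : ℚ) - y - 1 - m) = ∏ m ∈ Finset.range K, (m - y) := by
    rw [← Finset.prod_range_reflect]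
    refine Finset.prod_congr rfl fun j hj => ?_
    simp only [Finset.mem_range] at hj
    have h1 : ((K - 1 - j : ℕ) : ℚ) = (K : ℚ) - 1 - j := by
      rw [Nat.cast_sub (by omega), Nat.cast_sub (by omega), Nat.cast_one]
    rw [h1]; ring
  rw [this]
  have h2 : ∏ m ∈ Finset.range K, ((m : ℚ) - y) = (-1) ^ K * ∏ m ∈ Finset.range K, (y - m) := by
    have : ∀ j ∈ Finset.range K, (j : ℚ) - y = (-1) * (y - j) := fun j _ => by ring
    rw [Finset.prod_congr rfl this, Finset.prod_mul_distrib, Finset.prod_const,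
      Finset.card_range]
  rw [h2, mul_div_assoc, ← mul_assoc, ← pow_add, ← two_mul, pow_mul]
  norm_num

lemma sum_shift {g : ℕ → ℚ} {e c : ℕ} (hec : e ≤ c) (h0 : ∀ l, l < e → g l = 0) :
    ∑ l ∈ range c, g l = ∑ j ∈ range (c - e), g (e + j) := by
  rw [← Finset.sum_Ico_eq_sum_range, Finset.range_eq_Ico,
    ← Finset.sum_Ico_consecutive g (Nat.zero_le e) hec,
    Finset.sum_eq_zero fun l hl => h0 l (Finset.mem_Ico.mp hl).2, zero_add]

lemma sum_neg_one_pow (n : ℕ) : ∑ m ∈ range n, (-1 : ℚ) ^ m = if Even n then 0 else 1 := by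
  induction n with
  | zero => simp
  | succ k ih =>
      rw [Finset.sum_range_succ, ih]
      rcases Nat.even_or_odd k with h | h
      · rw [if_pos h, if_neg (by simp [Nat.even_add_one, h]), h.neg_one_pow]; ring
      · rw [if_neg (by simp [Nat.not_even_iff_odd]; exact h),
          if_pos (by rw [Nat.even_add_one]; simp [Nat.not_even_iff_odd]; exact h),
          h.neg_one_pow]; ring


def entS (d : ℕ) (m n : ℕ) : ℚ := (-1) ^ (d + m) * gbinom (m : ℚ) (n : ℤ)
def entT (c : ℕ) (n k : ℕ) : ℚ := (-1) ^ k * gbinom ((c : ℚ) - 1 - k) ((n : ℤ) - k)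
def entL (B : ℚ) (n k : ℕ) : ℚ := gbinom B ((n : ℤ) - k)
def entN (r : ℚ) (d : ℕ) (m k : ℕ) : ℚ := gbinom r ((d : ℤ) + m - k)

def matS (d c : ℕ) : Matrix (Fin c) (Fin c) ℚ := fun m n => entS d m n
def matT (c : ℕ) : Matrix (Fin c) (Fin c) ℚ := fun n k => entT c n k
def matL (B : ℚ) (c : ℕ) : Matrix (Fin c) (Fin c) ℚ := fun n k => entL B n k
def matN (r : ℚ) (d c : ℕ) : Matrix (Fin c) (Fin c) ℚ := fun m k => entN r d m k

lemma pow_neg_one_cancel (p q : ℕ) : (-1 : ℚ) ^ p * (-1) ^ (p + q) = (-1) ^ q := by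
  rw [pow_add, ← mul_assoc, ← pow_add, ← two_mul, pow_mul]
  norm_num

lemma mulLL (B B' : ℚ) (c : ℕ) : matL B c * matL B' c = matL (B + B') c := by
  ext n k
  rw [Matrix.mul_apply]
  simp only [matL]
  rw [Fin.sum_univ_eq_sum_range (fun l : ℕ => entL B n l * entL B' l k) c]
  rw [sum_shift (e := (k : ℕ)) (le_of_lt k.isLt)
    (fun l hl => by
      simp only [entL]
      rw [gbinom_of_neg (show (l : ℤ) - ((k : ℕ) : ℤ) < 0 by omega), mul_zero])]
  have hstep : ∀ j ∈ range (c - (k : ℕ)), entL B n ((k : ℕ) + j) * entL B' ((k : ℕ) + j) k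
      = gbinom B' (j : ℤ) * gbinom B (((n : ℤ) - (k : ℕ)) - j) := by
    intro j hj
    simp only [entL]
    rw [show ((((k : ℕ) + j : ℕ) : ℤ) - ((k : ℕ) : ℤ)) = (j : ℤ) by push_cast; ring,
      show ((n : ℤ) - (((k : ℕ) + j : ℕ) : ℤ)) = ((n : ℤ) - (k : ℕ)) - j by push_cast; ring,
      mul_comm]
  rw [Finset.sum_congr rfl hstep,
    vanderInt B' B _ _ (by push_cast [Nat.cast_sub (le_of_lt k.isLt)]; omega)]
  show gbinom (B' + B) _ = entL (B + B') n k
  rw [entL, add_comm B B']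

lemma matL_zero (c : ℕ) : matL 0 c = 1 := by
  ext n k
  show entL 0 n k = (1 : Matrix (Fin c) (Fin c) ℚ) n k
  rw [entL, gbinom_zero_left, Matrix.one_apply]
  have hiff : ((n : ℤ) - (k : ℕ) = 0) ↔ n = k := by
    rw [sub_eq_zero, Int.natCast_inj, Fin.val_inj]
  rw [if_congr hiff rfl rfl]

lemma aux_alt (M a s : ℕ) (haM : a ≤ M) (has : a < s) :
    ∑ j ∈ range s, (-1 : ℚ) ^ j * (gbinom ((M : ℚ) - j) ((a : ℤ) - j) * gbinom (M : ℚ) (j : ℤ))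
      = if a = 0 then 1 else 0 := by
  rw [← Finset.sum_subset (Finset.range_subset_range.mpr (show a + 1 ≤ s by omega))
      (fun j hj hj' => by
        simp only [Finset.mem_range] at hj hj'
        rw [gbinom_of_neg (show (a : ℤ) - j < 0 by omega), zero_mul, mul_zero])]
  have hstep : ∀ j ∈ range (a + 1),
      (-1 : ℚ) ^ j * (gbinom ((M : ℚ) - j) ((a : ℤ) - j) * gbinom (M : ℚ) (j : ℤ))
      = (M.choose a : ℚ) * ((-1 : ℚ) ^ j * (a.choose j : ℚ)) := by
    intro j hj
    simp only [Finset.mem_range] at hj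
    have hja : j ≤ a := by omega
    have c1 : ((M : ℚ) - j) = ((M - j : ℕ) : ℚ) := by
      rw [Nat.cast_sub (by omega)]
    have c2 : ((a : ℤ) - j) = ((a - j : ℕ) : ℤ) := by omega
    rw [c1, c2, gbinom_natCast, gbinom_natCast, ← Nat.cast_mul,
      mul_comm ((M - j).choose (a - j)), ← Nat.choose_mul (n := M) hja, Nat.cast_mul]
    ring
  rw [Finset.sum_congr rfl hstep, ← Finset.mul_sum]
  have halt : ∑ j ∈ range (a + 1), (-1 : ℚ) ^ j * (a.choose j : ℚ) = if a = 0 then 1 else 0 := by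
    have hZ := Int.alternating_sum_range_choose (n := a)
    by_cases ha : a = 0
    · subst ha; simp
    · have hQ := congrArg (fun z : ℤ => (z : ℚ)) hZ
      push_cast at hQ
      rw [if_neg ha] at hQ
      rw [if_neg ha]
      exact_mod_cast hQ
  rw [halt]
  by_cases ha : a = 0
  · subst ha; simp
  · rw [if_neg ha, mul_zero]

lemma mulTT (c : ℕ) : matT c * matT c = 1 := by
  ext n m
  rw [Matrix.mul_apply]
  simp only [matT]
  rw [Fin.sum_univ_eq_sum_range (fun k : ℕ => entT c n k * entT c k m) c]
  rw [sum_shift (e := (m : ℕ)) (le_of_lt m.isLt)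
    (fun l hl => by
      simp only [entT]
      rw [gbinom_of_neg (show (l : ℤ) - ((m : ℕ) : ℤ) < 0 by omega), mul_zero, mul_zero])]
  by_cases hnm : (m : ℕ) ≤ (n : ℕ)
  · set a := (n : ℕ) - (m : ℕ) with ha
    set M := c - 1 - (m : ℕ) with hM
    have hmc : (m : ℕ) < c := m.isLt
    have hnc : (n : ℕ) < c := n.isLt
    have hstep : ∀ j ∈ range (c - (m : ℕ)),
        entT c n ((m : ℕ) + j) * entT c ((m : ℕ) + j) m
        = (-1 : ℚ) ^ j * (gbinom ((M : ℚ) - j) ((a : ℤ) - j) * gbinom (M : ℚ) (j : ℤ)) := by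
      intro j hj
      simp only [Finset.mem_range] at hj
      have hjM : j ≤ M := by omega
      simp only [entT]
      have c1 : (c : ℚ) - 1 - (((m : ℕ) + j : ℕ) : ℚ) = (M : ℚ) - j := by
        have : (M : ℚ) = (c : ℚ) - 1 - (m : ℕ) := by
          rw [hM, Nat.cast_sub (by omega), Nat.cast_sub (by omega)]; push_cast; ring
        rw [this]; push_cast; ring
      have c2 : (n : ℤ) - (((m : ℕ) + j : ℕ) : ℤ) = (a : ℤ) - j := by
        push_cast; omega
      have c3 : (c : ℚ) - 1 - ((m : ℕ) : ℚ) = (M : ℚ) := by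
        rw [hM, Nat.cast_sub (by omega), Nat.cast_sub (by omega)]; push_cast; ring
      have c4 : ((((m : ℕ) + j : ℕ)) : ℤ) - ((m : ℕ) : ℤ) = (j : ℤ) := by push_cast; ring
      rw [c1, c2, c3, c4]
      have hsgn : (-1 : ℚ) ^ ((m : ℕ) + j) * (-1) ^ (m : ℕ) = (-1) ^ j := by
        rw [mul_comm]; rw [show (m : ℕ) + j = (m : ℕ) + j from rfl]
        exact pow_neg_one_cancel (m : ℕ) j
      calc (-1 : ℚ) ^ ((m : ℕ) + j) * gbinom ((M : ℚ) - j) ((a : ℤ) - j) *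
            ((-1) ^ (m : ℕ) * gbinom (M : ℚ) (j : ℤ))
          = ((-1 : ℚ) ^ ((m : ℕ) + j) * (-1) ^ (m : ℕ)) *
            (gbinom ((M : ℚ) - j) ((a : ℤ) - j) * gbinom (M : ℚ) (j : ℤ)) := by ring
        _ = _ := by rw [hsgn]
    rw [Finset.sum_congr rfl hstep, aux_alt M a (c - (m : ℕ)) (by omega) (by omega)]
    rw [Matrix.one_apply]
    have : (a = 0) ↔ (n = m) := by rw [← Fin.val_inj]; omega
    rw [if_congr this rfl rfl]
  · rw [Finset.sum_eq_zero fun j hj => by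
      simp only [entT]
      rw [gbinom_of_neg (show (n : ℤ) - (((m : ℕ) + j : ℕ) : ℤ) < 0 by push_cast; omega),
        mul_zero, zero_mul]]
    have hne : n ≠ m := by intro h; subst h; exact hnm le_rfl
    rw [Matrix.one_apply_ne hne]

lemma mulTL (B : ℚ) (c : ℕ) : matT c * matL B c = matL (-B) c * matT c := by
  ext n m
  rw [Matrix.mul_apply, Matrix.mul_apply]
  simp only [matT, matL]
  rw [Fin.sum_univ_eq_sum_range (fun k : ℕ => entT c n k * entL B k m) c]
  rw [Fin.sum_univ_eq_sum_range (fun l : ℕ => entL (-B) n l * entT c l m) c]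
  rw [sum_shift (e := (m : ℕ)) (le_of_lt m.isLt)
    (fun l hl => by
      simp only [entL]
      rw [gbinom_of_neg (show (l : ℤ) - ((m : ℕ) : ℤ) < 0 by omega), mul_zero])]
  rw [sum_shift (e := (m : ℕ)) (le_of_lt m.isLt)
    (fun l hl => by
      simp only [entT]
      rw [gbinom_of_neg (show (l : ℤ) - ((m : ℕ) : ℤ) < 0 by omega), mul_zero, mul_zero])]
  by_cases hnm : (m : ℕ) ≤ (n : ℕ)
  · set a := (n : ℕ) - (m : ℕ) with ha
    set M := c - 1 - (m : ℕ) with hM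
    have hmc : (m : ℕ) < c := m.isLt
    have hnc : (n : ℕ) < c := n.isLt
    have haM : a ≤ M := by omega
    have hMcast : (M : ℚ) = (c : ℚ) - 1 - (m : ℕ) := by
      rw [hM, Nat.cast_sub (by omega), Nat.cast_sub (by omega)]; push_cast; ring
    -- LHS
    have hstepL : ∀ j ∈ range (c - (m : ℕ)),
        entT c n ((m : ℕ) + j) * entL B ((m : ℕ) + j) m
        = (-1 : ℚ) ^ ((m : ℕ) + a) *
          (gbinom B (j : ℤ) * gbinom ((a : ℚ) - M - 1) ((a : ℤ) - j)) := by
      intro j hj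
      simp only [Finset.mem_range] at hj
      simp only [entT, entL]
      have c1 : (c : ℚ) - 1 - (((m : ℕ) + j : ℕ) : ℚ) = (M : ℚ) - j := by
        rw [hMcast]; push_cast; ring
      have c2 : (n : ℤ) - (((m : ℕ) + j : ℕ) : ℤ) = (a : ℤ) - j := by push_cast; omega
      have c4 : ((((m : ℕ) + j : ℕ)) : ℤ) - ((m : ℕ) : ℤ) = (j : ℤ) := by push_cast; ring
      rw [c1, c2, c4]
      by_cases hja : j ≤ a
      · have hrefl : gbinom ((M : ℚ) - j) ((a : ℤ) - j)
            = (-1 : ℚ) ^ (a - j) * gbinom ((a : ℚ) - M - 1) ((a : ℤ) - j) := by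
          have c5 : ((a : ℤ) - j) = ((a - j : ℕ) : ℤ) := by omega
          rw [c5, gbinom_reflect ((M : ℚ) - j) (a - j)]
          congr 2
          rw [Nat.cast_sub hja]; ring
        rw [hrefl]
        have hsgn : (-1 : ℚ) ^ ((m : ℕ) + j) * (-1) ^ (a - j) = (-1) ^ ((m : ℕ) + a) := by
          rw [← pow_add, show (m : ℕ) + j + (a - j) = (m : ℕ) + a by omega]
        calc (-1 : ℚ) ^ ((m : ℕ) + j) * ((-1) ^ (a - j) * gbinom ((a : ℚ) - M - 1) ((a : ℤ) - j)) *
              gbinom B (j : ℤ)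
            = ((-1 : ℚ) ^ ((m : ℕ) + j) * (-1) ^ (a - j)) *
              (gbinom B (j : ℤ) * gbinom ((a : ℚ) - M - 1) ((a : ℤ) - j)) := by ring
          _ = _ := by rw [hsgn]
      · rw [gbinom_of_neg (show (a : ℤ) - j < 0 by omega),
          gbinom_of_neg (show (a : ℤ) - j < 0 by omega)]
        ring
    rw [Finset.sum_congr rfl hstepL, ← Finset.mul_sum,
      vanderInt B ((a : ℚ) - M - 1) (a : ℤ) (c - (m : ℕ)) (by omega)]
    -- RHS
    have hstepR : ∀ i ∈ range (c - (m : ℕ)),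
        entL (-B) n ((m : ℕ) + i) * entT c ((m : ℕ) + i) m
        = (-1 : ℚ) ^ (m : ℕ) * (gbinom (M : ℚ) (i : ℤ) * gbinom (-B) ((a : ℤ) - i)) := by
      intro i hi
      simp only [Finset.mem_range] at hi
      simp only [entT, entL]
      have c2 : (n : ℤ) - (((m : ℕ) + i : ℕ) : ℤ) = (a : ℤ) - i := by push_cast; omega
      have c3 : (c : ℚ) - 1 - ((m : ℕ) : ℚ) = (M : ℚ) := by rw [hMcast]
      have c4 : ((((m : ℕ) + i : ℕ)) : ℤ) - ((m : ℕ) : ℤ) = (i : ℤ) := by push_cast; ring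
      rw [c2, c3, c4]
      ring
    rw [Finset.sum_congr rfl hstepR, ← Finset.mul_sum,
      vanderNat M (-B) (a : ℤ) (c - (m : ℕ)) (by omega)]
    -- final comparison
    have hrefl2 : gbinom ((M : ℚ) + -B) (a : ℤ)
        = (-1 : ℚ) ^ a * gbinom (B + ((a : ℚ) - M - 1)) (a : ℤ) := by
      rw [gbinom_reflect ((M : ℚ) + -B) a]
      congr 2
      ring
    rw [hrefl2]
    calc (-1 : ℚ) ^ ((m : ℕ) + a) * gbinom (B + ((a : ℚ) - M - 1)) (a : ℤ)
        = ((-1 : ℚ) ^ (m : ℕ) * (-1) ^ a) * gbinom (B + ((a : ℚ) - M - 1)) (a : ℤ) := by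
          rw [← pow_add]
      _ = (-1 : ℚ) ^ (m : ℕ) * ((-1) ^ a * gbinom (B + ((a : ℚ) - M - 1)) (a : ℤ)) := by ring
  · rw [Finset.sum_eq_zero fun j hj => by
      simp only [entT]
      rw [gbinom_of_neg (show (n : ℤ) - (((m : ℕ) + j : ℕ) : ℤ) < 0 by push_cast; omega),
        mul_zero, zero_mul]]
    rw [Finset.sum_eq_zero fun i hi => by
      simp only [entL]
      rw [gbinom_of_neg (show (n : ℤ) - (((m : ℕ) + i : ℕ) : ℤ) < 0 by push_cast; omega), zero_mul]]

lemma sign_swap_gbinom (d m n : ℕ) (r : ℚ) :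
    (-1 : ℚ) ^ (d + m) * gbinom ((m : ℚ) + r) ((d : ℤ) + m - n)
    = (-1 : ℚ) ^ n * gbinom ((d : ℚ) - 1 - n - r) ((d : ℤ) + m - n) := by
  set N : ℤ := (d : ℤ) + m - n with hN
  rcases lt_or_ge N 0 with h | h
  · rw [gbinom_of_neg h, gbinom_of_neg h, mul_zero, mul_zero]
  · set K := N.toNat with hK
    have hKN : (K : ℤ) = N := Int.toNat_of_nonneg h
    have hKdm : K + n = d + m := by omega
    have hKQ : (K : ℚ) = (d : ℚ) + m - n := by
      have h5 : ((K : ℤ) : ℚ) = (((d : ℤ) + m - n : ℤ) : ℚ) := by rw [hKN]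
      push_cast at h5
      exact h5
    have h1 : gbinom ((m : ℚ) + r) N = gbinom ((m : ℚ) + r) ((K : ℕ) : ℤ) := by rw [hKN]
    have h2 : gbinom ((d : ℚ) - 1 - n - r) N = gbinom ((d : ℚ) - 1 - n - r) ((K : ℕ) : ℤ) := by
      rw [hKN]
    rw [h1, h2, gbinom_reflect ((m : ℚ) + r) K]
    have h3 : (K : ℚ) - ((m : ℚ) + r) - 1 = (d : ℚ) - 1 - n - r := by rw [hKQ]; ring
    rw [h3]
    have hsgn : (-1 : ℚ) ^ (d + m) * (-1) ^ K = (-1) ^ n := by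
      rw [← pow_add, show d + m + K = 2 * K + n by omega, pow_add, pow_mul]
      norm_num
    calc (-1 : ℚ) ^ (d + m) * ((-1) ^ K * gbinom ((d : ℚ) - 1 - n - r) ((K : ℕ) : ℤ))
        = ((-1 : ℚ) ^ (d + m) * (-1) ^ K) * gbinom ((d : ℚ) - 1 - n - r) ((K : ℕ) : ℤ) := by ring
      _ = _ := by rw [hsgn]

lemma mulSN (r : ℚ) (d c : ℕ) :
    matS d c * matN r d c = matN ((d : ℚ) - c - r) d c * matT c := by
  ext m n
  rw [Matrix.mul_apply, Matrix.mul_apply]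
  simp only [matS, matN, matT]
  rw [Fin.sum_univ_eq_sum_range (fun k : ℕ => entS d m k * entN r d k n) c]
  rw [Fin.sum_univ_eq_sum_range (fun l : ℕ => entN ((d : ℚ) - c - r) d m l * entT c l n) c]
  have hmc : (m : ℕ) < c := m.isLt
  have hnc : (n : ℕ) < c := n.isLt
  -- LHS
  have hL : ∑ k ∈ range c, entS d m k * entN r d k n
      = (-1 : ℚ) ^ (d + (m : ℕ)) * gbinom (((m : ℕ) : ℚ) + r) ((d : ℤ) + (m : ℕ) - (n : ℕ)) := by
    rw [← Finset.sum_subset (Finset.range_subset_range.mpr (show (m : ℕ) + 1 ≤ c by omega))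
      (fun k hk hk' => by
        simp only [Finset.mem_range] at hk hk'
        simp only [entS]
        rw [gbinom_nat_eq_zero (show (m : ℕ) < k by omega), mul_zero, zero_mul])]
    rw [← Finset.sum_range_reflect
      (fun k : ℕ => entS d m k * entN r d k n) ((m : ℕ) + 1)]
    have hstep : ∀ j ∈ range ((m : ℕ) + 1),
        entS d m ((m : ℕ) + 1 - 1 - j) * entN r d ((m : ℕ) + 1 - 1 - j) n
        = (-1 : ℚ) ^ (d + (m : ℕ)) *
          (gbinom ((m : ℕ) : ℚ) (j : ℤ) * gbinom r (((d : ℤ) + (m : ℕ) - (n : ℕ)) - j)) := by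
      intro j hj
      simp only [Finset.mem_range] at hj
      have hjm : j ≤ (m : ℕ) := by omega
      simp only [entS, entN]
      have e1 : (m : ℕ) + 1 - 1 - j = (m : ℕ) - j := by omega
      rw [e1]
      have c1 : gbinom ((m : ℕ) : ℚ) (((m : ℕ) - j : ℕ) : ℤ) = gbinom ((m : ℕ) : ℚ) (j : ℤ) := by
        rw [gbinom_natCast, gbinom_natCast, Nat.choose_symm hjm]
      have c2 : (d : ℤ) + (((m : ℕ) - j : ℕ) : ℤ) - (n : ℕ) = ((d : ℤ) + (m : ℕ) - (n : ℕ)) - j := by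
        omega
      rw [c1, c2, mul_assoc]
    rw [Finset.sum_congr rfl hstep, ← Finset.mul_sum,
      vanderNat (m : ℕ) r ((d : ℤ) + (m : ℕ) - (n : ℕ)) ((m : ℕ) + 1) (by omega)]
  -- RHS
  set Mn := c - 1 - (n : ℕ) with hMn
  have hMncast : (Mn : ℚ) = (c : ℚ) - 1 - (n : ℕ) := by
    rw [hMn, Nat.cast_sub (by omega), Nat.cast_sub (by omega)]; push_cast; ring
  have hR : ∑ l ∈ range c, entN ((d : ℚ) - c - r) d m l * entT c l n
      = (-1 : ℚ) ^ (n : ℕ) * gbinom ((d : ℚ) - 1 - (n : ℕ) - r) ((d : ℤ) + (m : ℕ) - (n : ℕ)) := by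
    rw [sum_shift (e := (n : ℕ)) (le_of_lt n.isLt)
      (fun l hl => by
        simp only [entT]
        rw [gbinom_of_neg (show (l : ℤ) - ((n : ℕ) : ℤ) < 0 by omega), mul_zero, mul_zero])]
    have hstep : ∀ i ∈ range (c - (n : ℕ)),
        entN ((d : ℚ) - c - r) d m ((n : ℕ) + i) * entT c ((n : ℕ) + i) n
        = (-1 : ℚ) ^ (n : ℕ) *
          (gbinom ((Mn : ℕ) : ℚ) (i : ℤ) *
            gbinom ((d : ℚ) - c - r) (((d : ℤ) + (m : ℕ) - (n : ℕ)) - i)) := by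
      intro i hi
      simp only [Finset.mem_range] at hi
      simp only [entN, entT]
      have c1 : (d : ℤ) + (m : ℕ) - (((n : ℕ) + i : ℕ) : ℤ) = ((d : ℤ) + (m : ℕ) - (n : ℕ)) - i := by
        push_cast; ring
      have c2 : (c : ℚ) - 1 - ((n : ℕ) : ℚ) = (Mn : ℚ) := by rw [hMncast]
      have c3 : ((((n : ℕ) + i : ℕ)) : ℤ) - ((n : ℕ) : ℤ) = (i : ℤ) := by push_cast; ring
      rw [c1, c2, c3]
      ring
    rw [Finset.sum_congr rfl hstep, ← Finset.mul_sum,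
      vanderNat Mn ((d : ℚ) - c - r) ((d : ℤ) + (m : ℕ) - (n : ℕ)) (c - (n : ℕ)) (by omega)]
    have : (Mn : ℚ) + ((d : ℚ) - c - r) = (d : ℚ) - 1 - (n : ℕ) - r := by
      rw [hMncast]; ring
    rw [this]
  rw [hL, hR]
  exact sign_swap_gbinom d (m : ℕ) (n : ℕ) r

lemma trace_matS (d c : ℕ) (hd : Odd d) (hc : Odd c) : (matS d c).trace = -1 := by
  have h1 : ∀ m : Fin c, matS d c m m = (-1 : ℚ) ^ (d + (m : ℕ)) := by
    intro m
    show entS d m m = _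
    rw [entS, gbinom_natCast, Nat.choose_self, Nat.cast_one, mul_one]
  rw [Matrix.trace]
  simp only [Matrix.diag, h1]
  rw [Fin.sum_univ_eq_sum_range (fun m : ℕ => (-1 : ℚ) ^ (d + m)) c]
  have h2 : ∀ m ∈ range c, (-1 : ℚ) ^ (d + m) = (-1) * (-1 : ℚ) ^ m := by
    intro m _
    rw [pow_add, hd.neg_one_pow]
  rw [Finset.sum_congr rfl h2, ← Finset.mul_sum, sum_neg_one_pow,
    if_neg (Nat.not_even_iff_odd.mpr hc)]
  norm_num

lemma trace_TL (B : ℚ) (c : ℕ) (hc : Odd c) : (matT c * matL B c).trace = 1 := by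
  have h1 : ∀ n : Fin c, (matT c * matL B c) n n = (-1 : ℚ) ^ (n : ℕ) := by
    intro n
    rw [Matrix.mul_apply]
    simp only [matT, matL]
    rw [Fin.sum_univ_eq_sum_range (fun k : ℕ => entT c n k * entL B k n) c]
    rw [Finset.sum_eq_single_of_mem (n : ℕ) (Finset.mem_range.mpr n.isLt)
      (fun k hk hkn => by
        rcases lt_or_gt_of_ne hkn with h | h
        · rw [entL, gbinom_of_neg (show (k : ℤ) - ((n : ℕ) : ℤ) < 0 by omega), mul_zero]
        · rw [entT, gbinom_of_neg (show ((n : ℕ) : ℤ) - (k : ℤ) < 0 by omega),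
            mul_zero, zero_mul])]
    rw [entT, entL, sub_self, gbinom_zero_right, gbinom_zero_right]
    ring
  rw [Matrix.trace]
  simp only [Matrix.diag, h1]
  rw [Fin.sum_univ_eq_sum_range (fun n : ℕ => (-1 : ℚ) ^ n) c, sum_neg_one_pow,
    if_neg (Nat.not_even_iff_odd.mpr hc)]

lemma det_Amat (x : ℚ) (d c : ℕ) (hd : Odd d) (hc : Odd c) :
    (matN (x + d) d c + matN (-x - c) d c * matL ((x + d) + (x + c)) c).det = 0 := by
  set B : ℚ := (x + d) + (x + c) with hB
  set A : Matrix (Fin c) (Fin c) ℚ :=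
    matN (x + d) d c + matN (-x - c) d c * matL B c with hA
  by_contra hdet
  have hunit : IsUnit A.det := isUnit_iff_ne_zero.mpr hdet
  have hSA : matS d c * A = A * (matT c * matL B c) := by
    rw [hA, Matrix.mul_add, Matrix.add_mul]
    rw [← Matrix.mul_assoc (matS d c), mulSN (x + d) d c, mulSN (-x - c) d c]
    rw [show (d : ℚ) - c - (x + d) = -x - c by ring, show (d : ℚ) - c - (-x - c) = x + d by ring]
    have hLTL : matL B c * (matT c * matL B c) = matT c := by
      rw [mulTL B c, ← Matrix.mul_assoc, mulLL B (-B) c, show B + -B = 0 by ring,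
        matL_zero, Matrix.one_mul]
    rw [Matrix.mul_assoc (matN (-x - c) d c) (matL B c), hLTL]
    rw [Matrix.mul_assoc (matN (x + d) d c) (matT c) (matL B c)]
    rw [add_comm]
  have htr : (matS d c).trace = (matT c * matL B c).trace := by
    have h2 : matS d c = A * (matT c * matL B c) * A⁻¹ := by
      rw [← hSA, Matrix.mul_nonsing_inv_cancel_right _ _ hunit]
    rw [h2, Matrix.trace_mul_comm, ← Matrix.mul_assoc, Matrix.nonsing_inv_mul _ hunit,
      Matrix.one_mul]
  rw [trace_matS d c hd hc, trace_TL B c hc] at htr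
  norm_num at htr


theorem delta'_vanishes' (b c : ℕ) (hcb : c ≤ b) (hb : Even b) (hc : Odd c) (x : ℚ) :
    (M'mat x b c).det = 0 := by
  have hc1 : 1 ≤ c := by rcases hc with ⟨t, ht⟩; omega
  set d := b - c with hd
  have hbcd : b = c + d := by omega
  have hdodd : Odd d := by
    rcases hb with ⟨p, hp⟩; rcases hc with ⟨q, hq⟩
    exact ⟨p - q - 1, by omega⟩
  have hd1 : 1 ≤ d := by rcases hdodd with ⟨t, ht⟩; omega
  set B : ℚ := (x + d) + (x + c) with hB
  have hbQ : (b : ℚ) = (c : ℚ) + (d : ℚ) := by rw [hbcd]; push_cast; ring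
  have hbZ : (b : ℤ) = (c : ℤ) + (d : ℤ) := by rw [hbcd]; push_cast; ring
  have hBb : 2 * x + (b : ℚ) = B := by rw [hB, hbQ]; ring
  obtain ⟨W, hW0, hAW⟩ := (Matrix.exists_mulVec_eq_zero_iff).mpr (det_Amat x d c hdodd hc)
  rw [← hB] at hAW
  set P : Fin c → ℚ := (matL B c).mulVec W with hP
  set Wn : ℕ → ℚ := fun m => if h : m < c then W ⟨m, h⟩ else 0 with hWn
  set Pn : ℕ → ℚ := fun m => if h : m < c then P ⟨m, h⟩ else 0 with hPn
  set Phi : ℕ → ℚ := fun n =>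
    (∑ m ∈ range c, Wn m * gbinom (x + d) ((n : ℤ) - m)) +
    ∑ m ∈ range c, Pn m * gbinom (-x - c) ((n : ℤ) - m) with hPhi
  set u : Fin b → ℚ := fun j => if (j : ℕ) < d then -Phi (j : ℕ) else Wn ((j : ℕ) - d) with hu
  -- P as a sum
  have hPsum : ∀ i : ℕ, i < c → Pn i = ∑ k ∈ range c, gbinom B ((i : ℤ) - k) * Wn k := by
    intro i hi
    rw [hPn]
    simp only [dif_pos hi]
    rw [hP]
    simp only [Matrix.mulVec, dotProduct]
    have hterm : ∀ k : Fin c, matL B c ⟨i, hi⟩ k * W k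
        = (fun k : ℕ => gbinom B ((i : ℤ) - k) * Wn k) (k : ℕ) := by
      intro k
      show entL B i (k : ℕ) * W k = _
      rw [entL, hWn]
      simp only [dif_pos k.isLt]
    rw [Finset.sum_congr rfl fun k _ => hterm k,
      Fin.sum_univ_eq_sum_range (fun k : ℕ => gbinom B ((i : ℤ) - k) * Wn k) c]
  -- generic mulVec expansion for matN
  have hNmv : ∀ (r : ℚ) (v : Fin c → ℚ) (vn : ℕ → ℚ), (∀ k : Fin c, vn (k : ℕ) = v k) →
      ∀ (n : ℕ) (hn : n - d < c), d ≤ n →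
      (matN r d c).mulVec v ⟨n - d, hn⟩ = ∑ m ∈ range c, vn m * gbinom r ((n : ℤ) - m) := by
    intro r v vn hv n hn hdn
    simp only [Matrix.mulVec, dotProduct]
    have hterm : ∀ k : Fin c, matN r d c ⟨n - d, hn⟩ k * v k
        = (fun k : ℕ => vn k * gbinom r ((n : ℤ) - k)) (k : ℕ) := by
      intro k
      show entN r d (n - d) (k : ℕ) * v k = _
      rw [entN, ← hv k]
      rw [show (d : ℤ) + ((n - d : ℕ) : ℤ) - ((k : ℕ) : ℤ) = (n : ℤ) - (k : ℕ) by omega, mul_comm]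
    rw [Finset.sum_congr rfl fun k _ => hterm k,
      Fin.sum_univ_eq_sum_range (fun k : ℕ => vn k * gbinom r ((n : ℤ) - k)) c]
  -- window vanishing
  have hwin : ∀ n : ℕ, d ≤ n → n < b → Phi n = 0 := by
    intro n hdn hnb
    have hm'c : n - d < c := by omega
    have hzero := congrFun hAW ⟨n - d, hm'c⟩
    rw [Pi.zero_apply, Matrix.add_mulVec, ← Matrix.mulVec_mulVec, Pi.add_apply] at hzero
    rw [hNmv (x + d) W Wn (fun k => by rw [hWn]; simp only [dif_pos k.isLt]) n hm'c hdn] at hzero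
    rw [hNmv (-x - c) ((matL B c).mulVec W) Pn
      (fun k => by rw [hPn, hP]; simp only [dif_pos k.isLt]) n hm'c hdn] at hzero
    rw [hPhi]
    exact hzero
  -- the kernel equation
  have hMu : (M'mat x b c).mulVec u = 0 := by
    funext i
    rw [Pi.zero_apply]
    simp only [Matrix.mulVec, dotProduct]
    set f : ℕ → ℚ := fun n =>
      (if c + n < b then gbinom (x + (c : ℕ)) (((i : ℕ) : ℤ) - ((c : ℤ) + n) + (c : ℤ))
       else if (i : ℕ) < c then
         2 * gbinom (2 * x + (b : ℕ)) (((i : ℕ) : ℤ) - ((c : ℤ) + n) + (b : ℤ))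
       else gbinom (2 * x + (b : ℕ)) (((i : ℕ) : ℤ) - ((c : ℤ) + n) + (b : ℤ))) *
      (if n < d then -Phi n else Wn (n - d)) with hf
    have hmatch : ∀ j : Fin b, M'mat x b c i j * u j = f (j : ℕ) := by
      intro j
      simp only [hf, hu, M'mat]
    rw [Finset.sum_congr rfl fun j _ => hmatch j, Fin.sum_univ_eq_sum_range f b]
    -- split the range
    rw [Finset.range_eq_Ico, ← Finset.sum_Ico_consecutive f (Nat.zero_le d) (by omega : d ≤ b),
      Finset.sum_Ico_eq_sum_range (f := f) (m := d) (n := b), ← Finset.range_eq_Ico,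
      show b - d = c by omega]
    -- first block
    have hS1 : ∑ n ∈ range d, f n
        = -∑ n ∈ range b, Phi n * gbinom (x + c) ((i : ℤ) - n) := by
      have hstep : ∀ n ∈ range d, f n = -(Phi n * gbinom (x + c) ((i : ℤ) - n)) := by
        intro n hn
        simp only [Finset.mem_range] at hn
        simp only [hf]
        rw [if_pos (by omega : c + n < b), if_pos hn]
        rw [show ((i : ℕ) : ℤ) - ((c : ℤ) + n) + (c : ℤ) = (i : ℤ) - n by ring]
        ring
      rw [Finset.sum_congr rfl hstep, Finset.sum_neg_distrib]
      congr 1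
      refine Finset.sum_subset (Finset.range_subset_range.mpr (by omega : d ≤ b)) ?_
      intro n hn hn'
      simp only [Finset.mem_range] at hn hn'
      rw [hwin n (by omega) hn, zero_mul]
    -- inner convolution
    have hinner : ∀ (r : ℚ) (m : ℕ), m < c →
        ∑ n ∈ range b, gbinom r ((n : ℤ) - m) * gbinom (x + c) ((i : ℤ) - n)
        = gbinom (r + (x + c)) ((i : ℤ) - m) := by
      intro r m hm
      rw [sum_shift (e := m) (by omega)
        (fun l hl => by rw [gbinom_of_neg (show (l : ℤ) - (m : ℤ) < 0 by omega), zero_mul])]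
      have hstep : ∀ j ∈ range (b - m),
          gbinom r (((m + j : ℕ) : ℤ) - m) * gbinom (x + c) ((i : ℤ) - ((m + j : ℕ) : ℤ))
          = gbinom r (j : ℤ) * gbinom (x + c) ((((i : ℕ) : ℤ) - m) - j) := by
        intro j hj
        rw [show ((m + j : ℕ) : ℤ) - (m : ℤ) = (j : ℤ) by push_cast; ring,
          show ((i : ℕ) : ℤ) - ((m + j : ℕ) : ℤ) = (((i : ℕ) : ℤ) - m) - j by push_cast; ring]
      rw [Finset.sum_congr rfl hstep,
        vanderInt r (x + c) (((i : ℕ) : ℤ) - m) (b - m)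
          (by push_cast [Nat.cast_sub (by omega : m ≤ b)]; have := i.isLt; omega)]
    -- the central identity
    have hcent : ∑ n ∈ range b, Phi n * gbinom (x + c) ((i : ℤ) - n)
        = (∑ m ∈ range c, gbinom B ((i : ℤ) - m) * Wn m) + Pn (i : ℕ) := by
      simp only [hPhi]
      have e1 : ∀ n ∈ range b,
          ((∑ m ∈ range c, Wn m * gbinom (x + d) ((n : ℤ) - m)) +
            ∑ m ∈ range c, Pn m * gbinom (-x - c) ((n : ℤ) - m)) * gbinom (x + c) ((i : ℤ) - n)
          = (∑ m ∈ range c, Wn m * (gbinom (x + d) ((n : ℤ) - m) * gbinom (x + c) ((i : ℤ) - n))) +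
            ∑ m ∈ range c, Pn m * (gbinom (-x - c) ((n : ℤ) - m) * gbinom (x + c) ((i : ℤ) - n)) := by
        intro n _
        rw [add_mul, Finset.sum_mul, Finset.sum_mul]
        congr 1 <;> exact Finset.sum_congr rfl fun m _ => by ring
      rw [Finset.sum_congr rfl e1, Finset.sum_add_distrib, Finset.sum_comm,
        Finset.sum_comm (s := range b)]
      congr 1
      · refine Finset.sum_congr rfl fun m hm => ?_
        simp only [Finset.mem_range] at hm
        rw [← Finset.mul_sum, hinner (x + d) m hm, ← hB, mul_comm]
      · have e2 : ∀ m ∈ range c,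
            ∑ n ∈ range b, Pn m * (gbinom (-x - c) ((n : ℤ) - m) * gbinom (x + c) ((i : ℤ) - n))
            = if m = (i : ℕ) then Pn m else 0 := by
          intro m hm
          simp only [Finset.mem_range] at hm
          rw [← Finset.mul_sum, hinner (-x - c) m hm, show -x - (c : ℚ) + (x + c) = 0 by ring,
            gbinom_zero_left]
          rcases eq_or_ne m (i : ℕ) with h | h
          · rw [if_pos (by omega), if_pos h, mul_one]
          · rw [if_neg (by omega), if_neg h, mul_zero]
        rw [Finset.sum_congr rfl e2, Finset.sum_ite_eq' (range c) ((i : ℕ)) Pn]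
        rcases lt_or_ge ((i : ℕ)) c with h | h
        · rw [if_pos (Finset.mem_range.mpr h)]
        · rw [if_neg (by simp only [Finset.mem_range]; omega)]
          simp only [hPn]
          rw [dif_neg (by omega)]
    -- second block
    have hS2 : ∀ k ∈ range c, f (d + k)
        = (if (i : ℕ) < c then 2 * gbinom B ((i : ℤ) - k) else gbinom B ((i : ℤ) - k)) * Wn k := by
      intro k hk
      simp only [Finset.mem_range] at hk
      simp only [hf]
      rw [if_neg (by omega : ¬ c + (d + k) < b), if_neg (by omega : ¬ d + k < d),
        show d + k - d = k by omega,
        show ((i : ℕ) : ℤ) - ((c : ℤ) + ((d + k : ℕ) : ℤ)) + (b : ℤ) = ((i : ℕ) : ℤ) - k by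
          push_cast; omega,
        hBb]
    rw [hS1, Finset.sum_congr rfl hS2, hcent]
    by_cases hic : (i : ℕ) < c
    · simp only [if_pos hic]
      rw [hPsum (i : ℕ) hic]
      have e3 : ∀ k ∈ range c, 2 * gbinom B ((i : ℤ) - k) * Wn k
          = 2 * (gbinom B ((i : ℤ) - k) * Wn k) := fun k _ => by ring
      rw [Finset.sum_congr rfl e3, ← Finset.mul_sum]
      ring
    · simp only [if_neg hic]
      have e4 : Pn ((i : ℕ)) = 0 := by simp only [hPn]; rw [dif_neg (by omega)]
      rw [e4]
      ring
  have : (M'mat x b c).det = 0 := by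
    rw [← Matrix.exists_mulVec_eq_zero_iff]
    refine ⟨u, ?_, hMu⟩
    obtain ⟨m₀, hm₀⟩ := Function.ne_iff.mp hW0
    intro h0
    apply hm₀
    have := congrFun h0 ⟨d + (m₀ : ℕ), by omega⟩
    rw [hu] at this
    simp only [Pi.zero_apply] at this
    rw [if_neg (by omega)] at this
    rw [show d + (m₀ : ℕ) - d = (m₀ : ℕ) by omega, hWn] at this
    simp only [dif_pos m₀.isLt] at this
    rw [Pi.zero_apply]
    rw [← this]
  exact this

/-- Theorem 2(i): `Δ'(x;b,c) = 0` if `b` is even and `c` is odd. -/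
theorem delta'_vanishes (b c : ℕ) (hcb : c ≤ b) (hb : Even b) (hc : Odd c) (x : ℚ) :
    Δ'det x b c = 0 := by
  show (M'mat x b c).det = 0
  exact delta'_vanishes' b c hcb hb hc x
end

section
/- Let b, c be even integers with 0 < c < b. Then ∑_{k=0}^{c-1} (1-c)_k · (1-b+c)_k · (1/2 - b/2)_k / ( k! · (3/2 - b/2)_k · (1-b)_k ) = 0, the sum being taken in ℚ (all denominator factors are nonzero for 0 ≤ k ≤ c-1). -/
open Finset

lemma poch_natX (a : ℚ) (k : ℕ) : poch a (k:ℤ) = ∏ m ∈ Finset.range k, (a + m) := by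
  rw [poch, if_pos (Int.natCast_nonneg k), Int.toNat_natCast]

lemma diff_lemmaX (m : ℕ) (f : ℕ → ℚ) :
    ∑ k ∈ Finset.range (m+2), (-1:ℚ)^k * ((m+1).choose k : ℚ) * f k
      = ∑ k ∈ Finset.range (m+1), (-1:ℚ)^k * (m.choose k : ℚ) * (f k - f (k+1)) := by
  have e1 : ∑ k ∈ Finset.range (m+2), (-1:ℚ)^k * ((m+1).choose k : ℚ) * f k
      = (∑ k ∈ Finset.range (m+1), (-1:ℚ)^(k+1) * ((m+1).choose (k+1) : ℚ) * f (k+1)) + f 0 := by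
    rw [Finset.sum_range_succ' (fun k => (-1:ℚ)^k * ((m+1).choose k : ℚ) * f k) (m+1)]
    simp
  have e2 : ∑ k ∈ Finset.range (m+1), (-1:ℚ)^k * (m.choose k : ℚ) * f k
      = (∑ k ∈ Finset.range m, (-1:ℚ)^(k+1) * (m.choose (k+1) : ℚ) * f (k+1)) + f 0 := by
    rw [Finset.sum_range_succ' (fun k => (-1:ℚ)^k * (m.choose k : ℚ) * f k) m]
    simp
  have e3 : ∑ k ∈ Finset.range m, (-1:ℚ)^(k+1) * (m.choose (k+1) : ℚ) * f (k+1)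
      = ∑ k ∈ Finset.range (m+1), (-1:ℚ)^(k+1) * (m.choose (k+1) : ℚ) * f (k+1) := by
    rw [Finset.sum_range_succ]
    simp
  rw [e1]
  simp only [mul_sub]
  rw [Finset.sum_sub_distrib, e2, e3]
  have key : ∀ k ∈ Finset.range (m+1),
      (-1:ℚ)^(k+1) * ((m+1).choose (k+1) : ℚ) * f (k+1)
        = (-1:ℚ)^(k+1) * (m.choose (k+1) : ℚ) * f (k+1)
          - (-1:ℚ)^k * (m.choose k : ℚ) * f (k+1) := by
    intro k _
    have h := Nat.choose_succ_succ m k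
    rw [h]
    push_cast
    ring
  have e4 : ∑ k ∈ Finset.range (m+1), (-1:ℚ)^(k+1) * ((m+1).choose (k+1) : ℚ) * f (k+1)
      = (∑ k ∈ Finset.range (m+1), (-1:ℚ)^(k+1) * (m.choose (k+1) : ℚ) * f (k+1))
        - ∑ k ∈ Finset.range (m+1), (-1:ℚ)^k * (m.choose k : ℚ) * f (k+1) := by
    rw [← Finset.sum_sub_distrib]
    exact Finset.sum_congr rfl key
  rw [e4]
  ring

lemma H_evalX : ∀ (n : ℕ) (z : ℚ),
    ∑ k ∈ Finset.range (n+1), (-1:ℚ)^k * (n.choose k : ℚ) * ∏ j ∈ Finset.range (n+1), (z + k + j)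
      = (-1:ℚ)^n * ((n+1).factorial : ℚ) * (z + n) := by
  intro n
  induction n with
  | zero => intro z; simp
  | succ n ih =>
    intro z
    rw [diff_lemmaX n (fun k => ∏ j ∈ Finset.range (n+2), (z + k + j))]
    have key : ∀ k ∈ Finset.range (n+1),
        (-1:ℚ)^k * (n.choose k : ℚ) *
          ((∏ j ∈ Finset.range (n+2), (z + k + j)) - ∏ j ∈ Finset.range (n+2), (z + (k+1:ℕ) + j))
        = (-(n:ℚ)-2) * ((-1:ℚ)^k * (n.choose k : ℚ) * ∏ j ∈ Finset.range (n+1), ((z+1) + k + j)) := by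
      intro k _
      have h1 : (∏ j ∈ Finset.range (n+2), (z + k + j))
          = (∏ j ∈ Finset.range (n+1), ((z+1) + k + j)) * (z + k) := by
        rw [Finset.prod_range_succ' (fun j => z + k + j) (n+1)]
        congr 1
        · exact Finset.prod_congr rfl (fun j _ => by push_cast; ring)
        · push_cast; ring
      have h2 : (∏ j ∈ Finset.range (n+2), (z + (k+1:ℕ) + j))
          = (∏ j ∈ Finset.range (n+1), ((z+1) + k + j)) * ((z+1) + k + (n+1)) := by
        rw [Finset.prod_range_succ (fun j => z + (k+1:ℕ) + j) (n+1)]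
        congr 1
        · exact Finset.prod_congr rfl (fun j _ => by push_cast; ring)
        · push_cast; ring
      rw [h1, h2]
      ring
    rw [Finset.sum_congr rfl key, ← Finset.mul_sum, ih (z+1)]
    have : ((n+2).factorial : ℚ) = (n+2) * ((n+1).factorial : ℚ) := by
      rw [Nat.factorial_succ]; push_cast; ring
    push_cast [this]
    ring

lemma F_evalX : ∀ (n : ℕ) (y : ℚ), (∀ k : ℕ, k ≤ n → y + 2*k ≠ 0) →
    ∑ k ∈ Finset.range (n+1), (-1:ℚ)^k * (n.choose k : ℚ) *
        ((∏ j ∈ Finset.range (n+1), (y + k + j)) / (y + 2*k))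
      = if Even n then (n.factorial : ℚ) else 0 := by
  intro n
  induction n with
  | zero =>
    intro y hy
    have h0 : y ≠ 0 := by simpa using hy 0 le_rfl
    simp [div_self h0]
  | succ n ih =>
    intro y hy
    rw [diff_lemmaX n (fun k => (∏ j ∈ Finset.range (n+2), (y + k + j)) / (y + 2*k))]
    have key : ∀ k ∈ Finset.range (n+1),
        (-1:ℚ)^k * (n.choose k : ℚ) *
          ((∏ j ∈ Finset.range (n+2), (y + k + j)) / (y + 2*k)
            - (∏ j ∈ Finset.range (n+2), (y + (k+1:ℕ) + j)) / (y + 2*(k+1:ℕ)))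
        = (1/2) * ((-1:ℚ)^k * (n.choose k : ℚ) * ∏ j ∈ Finset.range (n+1), (y + k + j))
          - (1/2) * ((-1:ℚ)^k * (n.choose k : ℚ) * ∏ j ∈ Finset.range (n+1), ((y+2) + k + j))
          + (y/2 + n + 1) * ((-1:ℚ)^k * (n.choose k : ℚ) *
              ((∏ j ∈ Finset.range (n+1), (y + k + j)) / (y + 2*k)))
          - (y/2) * ((-1:ℚ)^k * (n.choose k : ℚ) *
              ((∏ j ∈ Finset.range (n+1), ((y+2) + k + j)) / ((y+2) + 2*k))) := by
      intro k hk
      rw [Finset.mem_range] at hk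
      have hk' : k ≤ n := Nat.lt_succ_iff.mp hk
      have hne1 : y + 2*(k:ℚ) ≠ 0 := hy k (le_trans hk' (Nat.le_succ n))
      have hne2 : (y+2) + 2*(k:ℚ) ≠ 0 := by
        have := hy (k+1) (by omega)
        push_cast at this
        intro h; apply this; linarith
      have h1 : (∏ j ∈ Finset.range (n+2), (y + k + j))
          = (∏ j ∈ Finset.range (n+1), (y + k + j)) * (y + k + (n+1)) := by
        rw [Finset.prod_range_succ (fun j => y + k + j) (n+1)]
        push_cast; ring
      have h2 : (∏ j ∈ Finset.range (n+2), (y + (k+1:ℕ) + j))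
          = (y + k + 1) * ∏ j ∈ Finset.range (n+1), ((y+2) + k + j) := by
        rw [Finset.prod_range_succ' (fun j => y + (k+1:ℕ) + j) (n+1)]
        have hp : (∏ j ∈ Finset.range (n+1), (y + ((k+1:ℕ):ℚ) + ((j+1:ℕ):ℚ)))
            = ∏ j ∈ Finset.range (n+1), ((y+2) + k + j) :=
          Finset.prod_congr rfl (fun j _ => by push_cast; ring)
        rw [hp]
        push_cast; ring
      have hd : y + 2*(((k+1:ℕ)):ℚ) = (y+2) + 2*k := by push_cast; ring
      rw [h1, h2, hd]
      simp only [div_eq_mul_inv]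
      linear_combination ((-1:ℚ)^k * (n.choose k : ℚ) * (∏ j ∈ Finset.range (n+1), (y + k + j)) / 2) * mul_inv_cancel₀ hne1 - ((-1:ℚ)^k * (n.choose k : ℚ) * (∏ j ∈ Finset.range (n+1), ((y+2) + k + j)) / 2) * mul_inv_cancel₀ hne2
    rw [Finset.sum_congr rfl key]
    rw [Finset.sum_sub_distrib, Finset.sum_add_distrib, Finset.sum_sub_distrib,
        ← Finset.mul_sum, ← Finset.mul_sum, ← Finset.mul_sum, ← Finset.mul_sum]
    rw [H_evalX n y, H_evalX n (y+2)]
    have ihy := ih y (fun k hk => hy k (le_trans hk (Nat.le_succ n)))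
    have ihy2 := ih (y+2) (fun k hk => by
      have := hy (k+1) (by omega)
      push_cast at this ⊢
      intro h; apply this; linarith)
    rw [ihy, ihy2]
    have hfact : ((n+1).factorial : ℚ) = (n+1) * (n.factorial : ℚ) := by
      rw [Nat.factorial_succ]; push_cast; ring
    rcases Nat.even_or_odd n with he | ho
    · have h2 : ¬ Even (n+1) := by simp [Nat.even_add_one, he]
      rw [if_neg h2, he.neg_one_pow]
      push_cast [hfact]
      simp only [if_pos he]
      ring
    · have h1 : ¬ Even n := by simp [Nat.not_even_iff_odd.mpr ho]
      have h2 : Even (n+1) := Odd.add_one ho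
      rw [if_pos h2, ho.neg_one_pow]
      push_cast [hfact]
      simp only [if_neg h1]
      ring

lemma half_shiftX (b : ℕ) (k : ℕ) :
    (∏ m ∈ Finset.range k, ((1:ℚ)/2 - b/2 + m)) * ((1 - (b:ℚ)) + 2*k)
      = (1 - (b:ℚ)) * ∏ m ∈ Finset.range k, ((3:ℚ)/2 - b/2 + m) := by
  have h1 := Finset.prod_range_succ (fun m : ℕ => (1:ℚ)/2 - b/2 + m) k
  have h2 := Finset.prod_range_succ' (fun m : ℕ => (1:ℚ)/2 - b/2 + m) k
  have hp : (∏ m ∈ Finset.range k, ((1:ℚ)/2 - b/2 + ((m+1:ℕ):ℚ)))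
      = ∏ m ∈ Finset.range k, ((3:ℚ)/2 - b/2 + m) :=
    Finset.prod_congr rfl (fun m _ => by push_cast; ring)
  rw [hp] at h2
  have e : (∏ m ∈ Finset.range k, ((1:ℚ)/2 - b/2 + m)) * ((1:ℚ)/2 - b/2 + k)
      = (∏ m ∈ Finset.range k, ((3:ℚ)/2 - b/2 + m)) * ((1:ℚ)/2 - b/2 + 0) := by
    rw [← h1, h2]; norm_num
  push_cast at e ⊢
  linear_combination 2 * e

lemma descX (n : ℕ) : ∀ k, k ≤ n →
    ∏ m ∈ Finset.range k, ((m:ℚ) - n) = (-1:ℚ)^k * (k.factorial : ℚ) * (n.choose k : ℚ) := by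
  intro k
  induction k with
  | zero => intro _; simp
  | succ k ih =>
    intro hk
    have hk' : k ≤ n := by omega
    rw [Finset.prod_range_succ, ih hk']
    have h := Nat.choose_succ_right_eq n k
    have hcast : (n.choose (k+1) : ℚ) * (k+1) = (n.choose k : ℚ) * ((n:ℚ) - k) := by
      have hsub : ((n - k : ℕ) : ℚ) = (n:ℚ) - k := by
        rw [Nat.cast_sub hk']
      rw [← hsub]
      exact_mod_cast congrArg (Nat.cast (R := ℚ)) h
    push_cast [Nat.factorial_succ]
    push_cast at hcast
    linear_combination ((-1:ℚ)^k * (k.factorial:ℚ)) * hcast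

lemma vandX (x : ℚ) (c k : ℕ) :
    (∏ m ∈ Finset.range c, (x + m)) * ∏ m ∈ Finset.range k, (x + c + m)
      = (∏ m ∈ Finset.range k, (x + m)) * ∏ j ∈ Finset.range c, (x + k + j) := by
  have h1 := Finset.prod_range_add (fun m : ℕ => x + m) c k
  have h2 := Finset.prod_range_add (fun m : ℕ => x + m) k c
  have hck : c + k = k + c := by omega
  rw [hck] at h1
  have e : (∏ m ∈ Finset.range c, (x + m)) * ∏ m ∈ Finset.range k, (x + ((c + m : ℕ):ℚ))
      = (∏ m ∈ Finset.range k, (x + m)) * ∏ j ∈ Finset.range c, (x + ((k + j : ℕ):ℚ)) := by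
    rw [← h1, h2]
  have p1 : (∏ m ∈ Finset.range k, (x + ((c + m : ℕ):ℚ))) = ∏ m ∈ Finset.range k, (x + c + m) :=
    Finset.prod_congr rfl (fun m _ => by push_cast; ring)
  have p2 : (∏ j ∈ Finset.range c, (x + ((k + j : ℕ):ℚ))) = ∏ j ∈ Finset.range c, (x + k + j) :=
    Finset.prod_congr rfl (fun j _ => by push_cast; ring)
  rw [p1, p2] at e
  exact e


/-- Equation (3.78): the Watson-type `₃F₂` sum vanishes for even `b` and even
`c` with `0 < c < b`. -/
theorem watson_sum_vanishes (b c : ℕ) (hb : Even b) (hc : Even c) (h0 : 0 < c) (hcb : c < b) :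
    ∑ k ∈ Finset.range c,
        poch (1 - (c : ℚ)) (k : ℤ) * poch (1 - (b : ℚ) + c) (k : ℤ) *
            poch (1 / 2 - (b : ℚ) / 2) (k : ℤ) /
          ((Nat.factorial k : ℚ) * poch (3 / 2 - (b : ℚ) / 2) (k : ℤ) *
            poch (1 - (b : ℚ)) (k : ℤ)) = 0 := by

  obtain ⟨n, rfl⟩ : ∃ n, c = n + 1 := ⟨c - 1, by omega⟩
  obtain ⟨t, rfl⟩ : ∃ t, b = t + t := hb
  have hnodd : Odd n := by
    rcases hc with ⟨s, hs⟩
    exact ⟨s - 1, by omega⟩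
  have hyk : ∀ k : ℕ, (1 - ((t+t : ℕ):ℚ)) + 2*(k:ℚ) ≠ 0 := by
    intro k h
    have h2 : ((1 + 2*k : ℕ) : ℚ) = ((t + t : ℕ) : ℚ) := by push_cast; push_cast at h; linarith
    have := Nat.cast_injective (R := ℚ) h2
    omega
  have hhalf : ∀ m : ℕ, (3:ℚ)/2 - ((t+t:ℕ):ℚ)/2 + (m:ℚ) ≠ 0 := by
    intro m h
    have h2 : ((3 + 2*m : ℕ) : ℚ) = ((t + t : ℕ) : ℚ) := by push_cast; push_cast at h; linarith
    have := Nat.cast_injective (R := ℚ) h2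
    omega
  have hfac : ∀ m : ℕ, m + 1 < t + t → ((1:ℚ) - ((t+t:ℕ):ℚ) + (m:ℚ)) ≠ 0 := by
    intro m hm h
    have h2 : ((m + 1 : ℕ) : ℚ) = ((t + t : ℕ) : ℚ) := by push_cast; push_cast at h; linarith
    have := Nat.cast_injective (R := ℚ) h2
    omega
  have hQcne : (∏ m ∈ Finset.range (n+1), ((1:ℚ) - ((t+t:ℕ):ℚ) + (m:ℚ))) ≠ 0 := by
    rw [Finset.prod_ne_zero_iff]
    intro m hm
    exact hfac m (by rw [Finset.mem_range] at hm; omega)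
  have key : ∀ k ∈ Finset.range (n+1),
      poch (1 - ((n+1:ℕ) : ℚ)) (k : ℤ) * poch (1 - ((t+t:ℕ) : ℚ) + ((n+1:ℕ):ℚ)) (k : ℤ) *
          poch (1 / 2 - ((t+t:ℕ) : ℚ) / 2) (k : ℤ) /
        ((Nat.factorial k : ℚ) * poch (3 / 2 - ((t+t:ℕ) : ℚ) / 2) (k : ℤ) *
          poch (1 - ((t+t:ℕ) : ℚ)) (k : ℤ))
      = ((1 - ((t+t:ℕ):ℚ)) / ∏ m ∈ Finset.range (n+1), ((1:ℚ) - ((t+t:ℕ):ℚ) + (m:ℚ))) *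
          ((-1:ℚ)^k * (n.choose k : ℚ) *
            ((∏ j ∈ Finset.range (n+1), ((1 - ((t+t:ℕ):ℚ)) + (k:ℚ) + (j:ℚ))) /
              ((1 - ((t+t:ℕ):ℚ)) + 2*(k:ℚ)))) := by
    intro k hk
    rw [Finset.mem_range] at hk
    have hkn : k ≤ n := by omega
    rw [poch_natX, poch_natX, poch_natX, poch_natX, poch_natX]
    have E1 : (∏ m ∈ Finset.range k, (1 - ((n+1:ℕ):ℚ) + (m:ℚ)))
        = (-1:ℚ)^k * (k.factorial : ℚ) * (n.choose k : ℚ) := by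
      rw [← descX n k hkn]
      exact Finset.prod_congr rfl (fun m _ => by push_cast; ring)
    have E2 : (∏ m ∈ Finset.range k, ((1:ℚ)/2 - ((t+t:ℕ):ℚ)/2 + (m:ℚ))) *
          ((1 - ((t+t:ℕ):ℚ)) + 2*(k:ℚ))
        = (1 - ((t+t:ℕ):ℚ)) * ∏ m ∈ Finset.range k, ((3:ℚ)/2 - ((t+t:ℕ):ℚ)/2 + (m:ℚ)) :=
      half_shiftX (t+t) k
    have E3 : (∏ m ∈ Finset.range (n+1), ((1 - ((t+t:ℕ):ℚ)) + (m:ℚ))) *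
          ∏ m ∈ Finset.range k, ((1 - ((t+t:ℕ):ℚ)) + ((n+1:ℕ):ℚ) + (m:ℚ))
        = (∏ m ∈ Finset.range k, ((1 - ((t+t:ℕ):ℚ)) + (m:ℚ))) *
          ∏ j ∈ Finset.range (n+1), ((1 - ((t+t:ℕ):ℚ)) + (k:ℚ) + (j:ℚ)) :=
      vandX (1 - ((t+t:ℕ):ℚ)) (n+1) k
    have hk! : (k.factorial : ℚ) ≠ 0 := Nat.cast_ne_zero.mpr k.factorial_ne_zero
    have hQ1ne : (∏ m ∈ Finset.range k, ((3:ℚ)/2 - ((t+t:ℕ):ℚ)/2 + (m:ℚ))) ≠ 0 := by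
      rw [Finset.prod_ne_zero_iff]; intro m _; exact hhalf m
    have hQ2ne : (∏ m ∈ Finset.range k, ((1:ℚ) - ((t+t:ℕ):ℚ) + (m:ℚ))) ≠ 0 := by
      rw [Finset.prod_ne_zero_iff]
      intro m hm
      exact hfac m (by rw [Finset.mem_range] at hm; omega)
    have hykk := hyk k
    set y : ℚ := 1 - ((t+t:ℕ):ℚ) with hydef
    set P1 := ∏ m ∈ Finset.range k, (1 - ((n+1:ℕ):ℚ) + (m:ℚ)) with hP1
    set P2 := ∏ m ∈ Finset.range k, (y + ((n+1:ℕ):ℚ) + (m:ℚ)) with hP2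
    set P3 := ∏ m ∈ Finset.range k, ((1:ℚ)/2 - ((t+t:ℕ):ℚ)/2 + (m:ℚ)) with hP3
    set Q1 := ∏ m ∈ Finset.range k, ((3:ℚ)/2 - ((t+t:ℕ):ℚ)/2 + (m:ℚ)) with hQ1
    set Q2 := ∏ m ∈ Finset.range k, (y + (m:ℚ)) with hQ2
    set Qc := ∏ m ∈ Finset.range (n+1), (y + (m:ℚ)) with hQc
    set Pck := ∏ j ∈ Finset.range (n+1), (y + (k:ℚ) + (j:ℚ)) with hPck
    have hD1 : (k.factorial:ℚ) * Q1 * Q2 ≠ 0 := mul_ne_zero (mul_ne_zero hk! hQ1ne) hQ2ne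
    have hD2 : Qc * (y + 2*(k:ℚ)) ≠ 0 := mul_ne_zero hQcne hykk
    calc P1 * P2 * P3 / ((k.factorial:ℚ) * Q1 * Q2)
        = (y * ((-1:ℚ)^k * (n.choose k : ℚ) * Pck)) / (Qc * (y + 2*(k:ℚ))) := by
          rw [div_eq_div_iff hD1 hD2, E1]
          linear_combination ((-1:ℚ)^k * (k.factorial:ℚ) * (n.choose k : ℚ) * P3 *
              (y + 2*(k:ℚ))) * E3 + ((-1:ℚ)^k * (k.factorial:ℚ) * (n.choose k : ℚ) * Q2 * Pck) * E2
      _ = (y / Qc) * ((-1:ℚ)^k * (n.choose k : ℚ) * (Pck / (y + 2*(k:ℚ)))) := by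
          field_simp
  rw [Finset.sum_congr rfl key, ← Finset.mul_sum]
  rw [F_evalX n (1 - ((t+t:ℕ):ℚ)) (fun k _ => hyk k)]
  rw [if_neg (by simpa using Nat.not_even_iff_odd.mpr hnodd)]
  rw [mul_zero]
end
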